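/- The full bushing stiffness map K : (x, Θ) ↦ (K_f x, N(Θ)ᵀ K_τ Θ) from ℝ³ × {Θ : |p| < π/2} to ℝ³ × ℝ³ is injective, assuming K_f and K_τ are positive definite diagonal matrices. -/

import Mathlib

open Real Matrix

/-- The gimbal-to-spatial torque conversion matrix of the bushing model. -/
noncomputable def Nmat (p w : ℝ) : Matrix (Fin 3) (Fin 3) ℝ :=
  !![Real.cos w / Real.cos p, Real.sin w / Real.cos p, 0;
     -Real.sin w, Real.cos w, 0;
     Real.cos w * Real.tan p, Real.sin w * Real.tan p, 1]

/-- The rotational stiffness map `Θ ↦ N(Θ)ᵀ K_τ Θ` of the bushing model,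
with `Θ = (r, p, w)` encoded as a function `Fin 3 → ℝ`. -/
noncomputable def rotStiffness (Kτ : Matrix (Fin 3) (Fin 3) ℝ) (Θ : Fin 3 → ℝ) :
    Fin 3 → ℝ :=
  (Nmat (Θ 1) (Θ 2))ᵀ.mulVec (Kτ.mulVec Θ)

/-- The full bushing stiffness map
`(x, Θ) ↦ (K_f x, N(Θ)ᵀ K_τ Θ)` is injective on `ℝ³ × {Θ : |p| < π/2}`
when `K_f` and `K_τ` are positive definite diagonal matrices. -/
theorem bushing_stiffness_injective
    (Kf : Matrix (Fin 3) (Fin 3) ℝ) (hKfdiag : Kf.IsDiag)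
    (hKfpos : ∀ i, 0 < Kf i i)
    (kr kp ky : ℝ) (hkr : 0 < kr) (hkp : 0 < kp) (hky : 0 < ky)
    (x₁ x₂ Θ₁ Θ₂ : Fin 3 → ℝ)
    (hp₁ : |Θ₁ 1| < Real.pi / 2) (hp₂ : |Θ₂ 1| < Real.pi / 2)
    (hf : Kf.mulVec x₁ = Kf.mulVec x₂)
    (hτ : rotStiffness (Matrix.diagonal ![kr, kp, ky]) Θ₁ =
          rotStiffness (Matrix.diagonal ![kr, kp, ky]) Θ₂) :
    x₁ = x₂ ∧ Θ₁ = Θ₂ := by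
  constructor
  · funext i
    have h := congrFun hf i
    simp only [Matrix.mulVec, dotProduct, Fin.sum_univ_three] at h
    have hs : ∀ (y : Fin 3 → ℝ), Kf i 0 * y 0 + Kf i 1 * y 1 + Kf i 2 * y 2 = Kf i i * y i := by
      intro y
      have := fun j (hj : i ≠ j) => hKfdiag hj
      fin_cases i <;> simp_all
    rw [hs, hs] at h
    exact mul_left_cancel₀ (hKfpos i).ne' h
    
  · have hc₁ : Real.cos (Θ₁ 1) ≠ 0 :=
      (Real.cos_pos_of_mem_Ioo ⟨(abs_lt.mp hp₁).1, (abs_lt.mp hp₁).2⟩).ne'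
    have hc₂ : Real.cos (Θ₂ 1) ≠ 0 :=
      (Real.cos_pos_of_mem_Ioo ⟨(abs_lt.mp hp₂).1, (abs_lt.mp hp₂).2⟩).ne'
    have h0 := congrFun hτ 0
    have h1 := congrFun hτ 1
    have h2 := congrFun hτ 2
    simp [rotStiffness, Nmat, Matrix.mulVec, dotProduct, Fin.sum_univ_three,
      Matrix.diagonal] at h0 h1 h2
    have hw : Θ₁ 2 = Θ₂ 2 := h2.resolve_right hky.ne'
    rw [hw] at h0 h1
    have pyth := Real.sin_sq_add_cos_sq (Θ₂ 2)
    have hpeq : Θ₁ 1 = Θ₂ 1 := by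
      have key : kp * Θ₁ 1 = kp * Θ₂ 1 := by
        linear_combination Real.cos (Θ₂ 2) * h1 - Real.sin (Θ₂ 2) * h0 -
          (kp * Θ₁ 1 - kp * Θ₂ 1) * pyth
      exact mul_left_cancel₀ hkp.ne' key
    rw [hpeq] at h0 h1
    have hreq : Θ₁ 0 = Θ₂ 0 := by
      have key : kr * Θ₁ 0 / Real.cos (Θ₂ 1) = kr * Θ₂ 0 / Real.cos (Θ₂ 1) := by
        linear_combination Real.cos (Θ₂ 2) * h0 + Real.sin (Θ₂ 2) * h1 -
          (kr * Θ₁ 0 / Real.cos (Θ₂ 1) - kr * Θ₂ 0 / Real.cos (Θ₂ 1)) * pyth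
      field_simp at key
      exact key
    funext i
    fin_cases i
    · exact hreq
    · exact hpeq
    · exact hw
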